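/- Let γ ≥ 1 and R⁻ > 0, and for ε ∈ (0, R⁻) define A(ε) = ((R⁻ − ε)R⁻/√(2R⁻ − ε)) · √(2(h(R⁻) − h(R⁻ − ε))/ε). Then A(ε) = R⁻·c_s(R⁻) − ((γ + 1)/4)·c_s(R⁻)·ε + O(ε²) as ε → 0⁺; that is, the function ε ↦ A(ε) − R⁻c_s(R⁻) + ((γ + 1)/4)c_s(R⁻)ε is O(ε²) as ε → 0 from the right. -/

import Mathlib

open Real Filter Asymptotics

lemma analyticAt_rlog {x : ℝ} (hx : 0 < x) : AnalyticAt ℝ Real.log x := by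
  have h2 : AnalyticAt ℝ (fun y : ℝ => Complex.log (Complex.ofRealCLM y)) x :=
    ((analyticAt_clog (Complex.ofReal_mem_slitPlane.2 hx)).restrictScalars (𝕜 := ℝ)).comp
      (Complex.ofRealCLM.analyticAt x)
  have h1 : AnalyticAt ℝ (fun y : ℝ => (Complex.log (Complex.ofRealCLM y)).re) x :=
    (Complex.reCLM.analyticAt _).comp h2
  apply h1.congr
  filter_upwards with y
  simpa using Complex.log_ofReal_re y

lemma analyticAt_rpow_c {x : ℝ} (p : ℝ) (hx : 0 < x) :
    AnalyticAt ℝ (fun y : ℝ => y ^ p) x := by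
  have h1 : AnalyticAt ℝ (fun y : ℝ => Real.exp (Real.log y * p)) x :=
    analyticAt_rexp.comp ((analyticAt_rlog hx).mul analyticAt_const)
  apply h1.congr
  filter_upwards [Ioi_mem_nhds hx] with y hy
  rw [Real.rpow_def_of_pos hy]

lemma analyticAt_rsqrt {x : ℝ} (hx : 0 < x) : AnalyticAt ℝ Real.sqrt x :=
  (analyticAt_rpow_c (1 / 2) hx).congr
    (Filter.Eventually.of_forall fun y => (Real.sqrt_eq_rpow y).symm)


/-- The enthalpy: `h(ρ) = γ/(γ-1)·ρ^(γ-1)` for `γ > 1` and `h(ρ) = log ρ` for `γ = 1`. -/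
noncomputable def enth (γ ρ : ℝ) : ℝ :=
  if γ = 1 then Real.log ρ else γ / (γ - 1) * ρ ^ (γ - 1)

/-- The sound speed `c_s(ρ) = √(γ ρ^(γ-1))`. -/
noncomputable def soundSpeed (γ ρ : ℝ) : ℝ := Real.sqrt (γ * ρ ^ (γ - 1))

/-- The mass flux `A(ε)` of a shock of amplitude `ε` with left state `Rm`. -/
noncomputable def Aflux (γ Rm ε : ℝ) : ℝ :=
  ((Rm - ε) * Rm / Real.sqrt (2 * Rm - ε)) *
    Real.sqrt (2 * (enth γ Rm - enth γ (Rm - ε)) / ε)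

/-- Expansion of the mass flux:
`A(ε) = R⁻·c_s(R⁻) − ((γ+1)/4)·c_s(R⁻)·ε + O(ε²)` as `ε → 0⁺`. -/
theorem stmt12 (γ Rm : ℝ) (hγ : 1 ≤ γ) (hRm : 0 < Rm) :
    (fun ε => Aflux γ Rm ε - Rm * soundSpeed γ Rm + (γ + 1) / 4 * soundSpeed γ Rm * ε)
      =O[nhdsWithin 0 (Set.Ioi 0)] (fun ε => ε ^ 2) := by
  have hγ0 : (0 : ℝ) < γ := by linarith
  set c : ℝ := Real.sqrt (γ * Rm ^ (γ - 1)) with hc_def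
  -- derivative of enth
  have hh : ∀ ρ : ℝ, 0 < ρ → HasDerivAt (enth γ) (γ * ρ ^ (γ - 2)) ρ := by
    intro ρ hρ
    by_cases h1 : γ = 1
    · have he : enth γ = Real.log := by subst h1; funext y; simp [enth]
      rw [he, h1]
      have hl := Real.hasDerivAt_log hρ.ne'
      convert hl using 1
      rw [show (1 : ℝ) - 2 = -1 by norm_num, Real.rpow_neg_one, one_mul]
    · have he : enth γ = fun y => γ / (γ - 1) * y ^ (γ - 1) := by
        funext y; simp [enth, h1]
      rw [he]
      have hd := HasDerivAt.const_mul (γ / (γ - 1))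
        (Real.hasDerivAt_rpow_const (x := ρ) (p := γ - 1) (Or.inl hρ.ne'))
      refine hd.congr_deriv ?_
      rw [show γ - 1 - 1 = γ - 2 by ring]
      have hγ1 : γ - 1 ≠ 0 := sub_ne_zero.2 h1
      field_simp
  -- analyticity of enth
  have hhe : AnalyticAt ℝ (enth γ) Rm := by
    by_cases h1 : γ = 1
    · have he : enth γ = Real.log := by subst h1; funext y; simp [enth]
      rw [he]; exact analyticAt_rlog hRm
    · have he : enth γ = fun y => γ / (γ - 1) * y ^ (γ - 1) := by
        funext y; simp [enth, h1]
      rw [he]; exact analyticAt_const.mul (analyticAt_rpow_c _ hRm)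
  set f : ℝ → ℝ := fun t => enth γ (Rm - t) with hf_def
  have hfan : AnalyticAt ℝ f 0 := by
    have h0 : AnalyticAt ℝ (enth γ) ((fun t : ℝ => Rm - t) 0) := by simpa using hhe
    exact h0.comp (analyticAt_const.sub analyticAt_id)
  have hf' : ∀ t : ℝ, t < Rm → HasDerivAt f (-(γ * (Rm - t) ^ (γ - 2))) t := by
    intro t ht
    have h2 : HasDerivAt (fun s : ℝ => Rm - s) (-1) t := (hasDerivAt_id t).const_sub Rm
    have h3 := (hh (Rm - t) (by linarith)).comp t h2
    refine h3.congr_deriv ?_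
    ring
  set d : ℝ → ℝ := dslope f 0 with hd_def
  have hdan : AnalyticAt ℝ d 0 := by
    obtain ⟨p, hp⟩ := hfan
    exact hp.has_fpower_series_dslope_fslope.analyticAt
  have hd0 : d 0 = -(γ * Rm ^ (γ - 2)) := by
    rw [hd_def, dslope_same]
    have := (hf' 0 hRm).deriv
    simpa using this
  have hddan : AnalyticAt ℝ (deriv d) 0 := by
    obtain ⟨s, hs, hsan⟩ := hdan.exists_mem_nhds_analyticOnNhd
    exact hsan.deriv 0 (mem_of_mem_nhds hs)
  have hderiv_d : deriv d 0 = γ * (γ - 2) * Rm ^ (γ - 3) / 2 := by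
    have hfd : ∀ t : ℝ, f t = f 0 + t * d t := by
      intro t
      have h := sub_smul_dslope f 0 t
      simp only [sub_zero, smul_eq_mul] at h
      rw [hd_def]; linarith [h]
    have hev : (fun t : ℝ => d t + t * deriv d t) =ᶠ[nhds (0 : ℝ)]
        fun t => -(γ * (Rm - t) ^ (γ - 2)) := by
      filter_upwards [hdan.eventually_analyticAt, Iio_mem_nhds hRm] with t h1 h2
      have hdt : HasDerivAt d (deriv d t) t := h1.differentiableAt.hasDerivAt
      have hft : HasDerivAt f (d t + t * deriv d t) t := by
        have h3 : HasDerivAt (fun s : ℝ => f 0 + s * d s)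
            (0 + (1 * d t + t * deriv d t)) t :=
          (hasDerivAt_const t (f 0)).add ((hasDerivAt_id t).mul hdt)
        have h4 : HasDerivAt f (0 + (1 * d t + t * deriv d t)) t := by
          apply h3.congr_of_eventuallyEq
          filter_upwards with s
          exact hfd s
        simpa using h4
      exact hft.unique (hf' t h2)
    have hL : HasDerivAt (fun t : ℝ => d t + t * deriv d t)
        (deriv d 0 + (1 * deriv d 0 + 0 * deriv (deriv d) 0)) 0 :=
      (hdan.differentiableAt.hasDerivAt).add
        ((hasDerivAt_id 0).mul (hddan.differentiableAt.hasDerivAt))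
    have hR : HasDerivAt (fun t : ℝ => -(γ * (Rm - t) ^ (γ - 2)))
        (γ * (γ - 2) * Rm ^ (γ - 3)) 0 := by
      have h2 : HasDerivAt (fun s : ℝ => Rm - s) (-1) 0 := (hasDerivAt_id 0).const_sub Rm
      have h3 : HasDerivAt (fun s : ℝ => (Rm - s) ^ (γ - 2))
          (-1 * (γ - 2) * (Rm - 0) ^ (γ - 2 - 1)) 0 :=
        h2.rpow_const (Or.inl (by simpa using hRm.ne'))
      have h4 := (h3.const_mul γ).neg
      refine h4.congr_deriv ?_
      rw [show γ - 2 - 1 = γ - 3 by ring]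
      simp
      ring
    have hL' : HasDerivAt (fun t : ℝ => d t + t * deriv d t)
        (γ * (γ - 2) * Rm ^ (γ - 3)) 0 := by
      exact hR.congr_of_eventuallyEq hev
    have := hL.unique hL'
    simp only [one_mul, mul_zero, zero_mul, add_zero] at this
    linarith
  set G : ℝ → ℝ := fun ε =>
    ((Rm - ε) * Rm / Real.sqrt (2 * Rm - ε)) * Real.sqrt (2 * (-(d ε))) with hG_def
  have hAG : ∀ ε : ℝ, ε ≠ 0 → Aflux γ Rm ε = G ε := by
    intro ε hε
    have hdval : d ε = (f ε - f 0) / ε := by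
      rw [hd_def, dslope_of_ne f hε, slope_def_field]
      simp
    rw [hG_def, Aflux]
    have : 2 * (enth γ Rm - enth γ (Rm - ε)) / ε = 2 * (-(d ε)) := by
      rw [hdval, hf_def]
      simp only [sub_zero]
      field_simp
      ring
    rw [this]
  have hd0pos : (0 : ℝ) < 2 * (-(d 0)) := by
    rw [hd0, neg_neg]
    have := Real.rpow_pos_of_pos hRm (γ - 2)
    positivity
  have hGan : AnalyticAt ℝ G 0 := by
    have h1 : AnalyticAt ℝ (fun ε : ℝ => (Rm - ε) * Rm) 0 :=
      (analyticAt_const.sub analyticAt_id).mul analyticAt_const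
    have h2 : AnalyticAt ℝ (fun ε : ℝ => Real.sqrt (2 * Rm - ε)) 0 := by
      have hout : AnalyticAt ℝ Real.sqrt ((fun ε : ℝ => 2 * Rm - ε) 0) := by
        apply analyticAt_rsqrt
        simpa using by linarith
      exact hout.comp (analyticAt_const.sub analyticAt_id)
    have h2ne : Real.sqrt (2 * Rm - 0) ≠ 0 := by
      rw [sub_zero]
      positivity
    have h4 : AnalyticAt ℝ (fun ε : ℝ => 2 * (-(d ε))) 0 := by
      exact analyticAt_const.mul (by
        have := hdan.neg
        apply this.congr
        filter_upwards with t
        simp [Pi.neg_apply])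
    have h5 : AnalyticAt ℝ (fun ε : ℝ => Real.sqrt (2 * (-(d ε)))) 0 :=
      AnalyticAt.comp (g := Real.sqrt) (f := fun ε : ℝ => 2 * (-(d ε)))
        (analyticAt_rsqrt hd0pos) h4
    exact (h1.div h2 h2ne).mul h5
  have hRm1 : Rm ^ (γ - 2) * Rm = Rm ^ (γ - 1) := by
    rw [show γ - 1 = (γ - 2) + 1 by ring, Real.rpow_add hRm, Real.rpow_one]
  have hRm2 : Rm ^ (γ - 3) * Rm = Rm ^ (γ - 2) := by
    rw [show γ - 2 = (γ - 3) + 1 by ring, Real.rpow_add hRm, Real.rpow_one]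
  have hR2pos : (0 : ℝ) < Rm ^ (γ - 2) := Real.rpow_pos_of_pos hRm _
  have hR1pos : (0 : ℝ) < Rm ^ (γ - 1) := Real.rpow_pos_of_pos hRm _
  have hcpos : (0 : ℝ) < c := by rw [hc_def]; positivity
  set P : ℝ := Real.sqrt (2 * Rm) with hP_def
  set Q : ℝ := Real.sqrt (2 * (γ * Rm ^ (γ - 2))) with hQ_def
  have hPpos : 0 < P := by rw [hP_def]; positivity
  have hQpos : 0 < Q := by rw [hQ_def]; positivity
  have hP2 : P * P = 2 * Rm := Real.mul_self_sqrt (by positivity)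
  have hQ2 : Q * Q = 2 * (γ * Rm ^ (γ - 2)) := Real.mul_self_sqrt (by positivity)
  have hPQ : P * Q = 2 * c := by
    rw [hP_def, hQ_def, ← Real.sqrt_mul (by positivity), hc_def]
    rw [show 2 * Rm * (2 * (γ * Rm ^ (γ - 2))) = 4 * (γ * (Rm ^ (γ - 2) * Rm)) by ring, hRm1]
    rw [show (4 : ℝ) * (γ * Rm ^ (γ - 1)) = 2 ^ 2 * (γ * Rm ^ (γ - 1)) by norm_num]
    rw [Real.sqrt_mul (by positivity), Real.sqrt_sq (by norm_num)]
  have hG0 : G 0 = Rm * c := by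
    rw [hG_def]
    simp only [sub_zero, mul_zero]
    rw [hd0, neg_neg]
    rw [← hP_def, ← hQ_def]
    rw [div_mul_eq_mul_div, eq_comm, eq_div_iff hPpos.ne']
    apply mul_right_cancel₀ hPpos.ne'
    linear_combination Rm * c * hP2 - Rm * Rm * hPQ
  have hG1 : HasDerivAt G (-((γ + 1) / 4 * c)) 0 := by
    have hn : HasDerivAt (fun ε : ℝ => (Rm - ε) * Rm) (-1 * Rm) 0 :=
      ((hasDerivAt_id 0).const_sub Rm).mul_const Rm
    have hq0 : HasDerivAt (fun ε : ℝ => 2 * Rm - ε) (-1) 0 :=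
      (hasDerivAt_id 0).const_sub (2 * Rm)
    have hq : HasDerivAt (fun ε : ℝ => Real.sqrt (2 * Rm - ε))
        (-1 / (2 * Real.sqrt (2 * Rm - 0))) 0 :=
      hq0.sqrt (by simpa using by linarith)
    have hqne : Real.sqrt (2 * Rm - 0) ≠ 0 := by
      rw [sub_zero]; positivity
    have hu : HasDerivAt (fun ε : ℝ => (Rm - ε) * Rm / Real.sqrt (2 * Rm - ε))
        ((-1 * Rm * Real.sqrt (2 * Rm - 0) -
          (Rm - 0) * Rm * (-1 / (2 * Real.sqrt (2 * Rm - 0)))) /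
          Real.sqrt (2 * Rm - 0) ^ 2) 0 := hn.div hq hqne
    have hw : HasDerivAt (fun ε : ℝ => 2 * (-(d ε))) (2 * -(deriv d 0)) 0 :=
      (hdan.differentiableAt.hasDerivAt.neg).const_mul 2
    have hv : HasDerivAt (fun ε : ℝ => Real.sqrt (2 * (-(d ε))))
        (2 * -(deriv d 0) / (2 * Real.sqrt (2 * (-(d 0))))) 0 :=
      hw.sqrt hd0pos.ne'
    have hGm := hu.mul hv
    have hG1' : HasDerivAt G
        ((-1 * Rm * Real.sqrt (2 * Rm - 0) -
          (Rm - 0) * Rm * (-1 / (2 * Real.sqrt (2 * Rm - 0)))) /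
          Real.sqrt (2 * Rm - 0) ^ 2 * Real.sqrt (2 * (-(d 0))) +
        (Rm - 0) * Rm / Real.sqrt (2 * Rm - 0) *
          (2 * -(deriv d 0) / (2 * Real.sqrt (2 * (-(d 0)))))) 0 := by
      rw [hG_def]
      exact hGm
    convert hG1' using 1
    rw [hd0, hderiv_d, neg_neg]
    simp only [sub_zero]
    rw [← hP_def, ← hQ_def]
    have hc' : c = P * Q / 2 := by linarith
    have hR3 : Rm ^ (γ - 3) = Rm ^ (γ - 2) / Rm := by
      rw [eq_div_iff hRm.ne']; exact hRm2
    have hR2' : Rm ^ (γ - 2) = Q * Q / (2 * γ) := by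
      rw [eq_div_iff (by positivity)]; linarith
    have hRmP : Rm = P * P / 2 := by linarith
    rw [hc', hR3, hR2', hRmP]
    field_simp
    ring
  obtain ⟨p, hp⟩ := hGan
  have hb := hp.isBigO_sub_partialSum_pow 2
  have hcoeff0 : p.coeff 0 = G 0 := hp.coeff_zero 1
  have hcoeff1 : p.coeff 1 = deriv G 0 := hp.deriv.symm
  have hderivG : deriv G 0 = -((γ + 1) / 4 * c) := hG1.deriv
  have hps : ∀ y : ℝ, p.partialSum 2 y = G 0 + deriv G 0 * y := by
    intro y
    rw [FormalMultilinearSeries.partialSum]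
    rw [Finset.sum_range_succ, Finset.sum_range_succ, Finset.sum_range_zero]
    rw [FormalMultilinearSeries.apply_eq_pow_smul_coeff,
      FormalMultilinearSeries.apply_eq_pow_smul_coeff, hcoeff0, hcoeff1]
    simp [smul_eq_mul]
    ring
  have key : (fun ε : ℝ => G ε - G 0 - deriv G 0 * ε) =O[nhds (0 : ℝ)] fun ε => ε ^ 2 := by
    have h3 : (fun y : ℝ => ‖y‖ ^ 2) =O[nhds (0 : ℝ)] fun y => y ^ 2 :=
      Asymptotics.isBigO_of_le _ fun y => by
        simp [Real.norm_eq_abs, abs_pow, abs_abs]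
    refine (hb.congr_left ?_).trans h3
    intro y
    rw [zero_add, hps]
    ring
  have key2 : (fun ε : ℝ => G ε - G 0 - deriv G 0 * ε) =O[nhdsWithin 0 (Set.Ioi 0)]
      fun ε => ε ^ 2 := key.mono nhdsWithin_le_nhds
  refine key2.congr' ?_ EventuallyEq.rfl
  have hsc : soundSpeed γ Rm = c := rfl
  filter_upwards [self_mem_nhdsWithin] with ε hε
  rw [hG0, hderivG, hsc, hAG ε (ne_of_gt hε)]
  ring
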